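/- (Local frustration-freeness of the AKLT chain.) Let H : Matrix (Fin 3 × Fin 3) (Fin 3 × Fin 3) ℂ be the AKLT two-site Hamiltonian H = (1/2)(M + (1/3)·M·M) + (1/3)·1, where M = S_x⊗S_x + S_y⊗S_y + S_z⊗S_z (Kronecker products). Then for all m₁, m₂ : Fin 3, Σ_{l₁, l₂ : Fin 3} H (m₁,m₂) (l₁,l₂) • (B l₁ · B l₂) = 0 as a 2×2 complex matrix. -/

import Mathlib

open Matrix
open scoped Kronecker

noncomputable section

/-- Pauli matrix `X` -/
def X : Matrix (Fin 2) (Fin 2) ℂ := !![0, 1; 1, 0]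

/-- Pauli matrix `Z` -/
def Z : Matrix (Fin 2) (Fin 2) ℂ := !![1, 0; 0, -1]

/-- spin-1 matrix `S_x = (1/√2)·!![0,1,0;1,0,1;0,1,0]` -/
def Sx : Matrix (Fin 3) (Fin 3) ℂ :=
  (1 / (Real.sqrt 2 : ℂ)) • !![0, 1, 0; 1, 0, 1; 0, 1, 0]

/-- spin-1 matrix `S_y = (−i/√2)·!![0,1,0;−1,0,1;0,−1,0]` -/
def Sy : Matrix (Fin 3) (Fin 3) ℂ :=
  (-Complex.I / (Real.sqrt 2 : ℂ)) • !![0, 1, 0; -1, 0, 1; 0, -1, 0]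

/-- spin-1 matrix `S_z` (the `Fin 3` index labels the `S_z`-eigenbasis `+1, 0, −1`) -/
def Sz : Matrix (Fin 3) (Fin 3) ℂ := !![1, 0, 0; 0, 0, 0; 0, 0, -1]

/-- the Heisenberg coupling `M = S_x⊗S_x + S_y⊗S_y + S_z⊗S_z` (Kronecker products) -/
def M : Matrix (Fin 3 × Fin 3) (Fin 3 × Fin 3) ℂ := Sx ⊗ₖ Sx + Sy ⊗ₖ Sy + Sz ⊗ₖ Sz

/-- the AKLT two-site Hamiltonian `H = (1/2)(M + (1/3)·M·M) + (1/3)·1` -/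
def H : Matrix (Fin 3 × Fin 3) (Fin 3 × Fin 3) ℂ :=
  (1 / 2 : ℂ) • (M + (1 / 3 : ℂ) • (M * M)) + (1 / 3 : ℂ) • 1

/-- the AKLT matrix-product tensors in the `S_z`-eigenbasis:
`B 0 = (X·Z − X)/√2`, `B 1 = Z`, `B 2 = (X + X·Z)/√2` -/
def B : Fin 3 → Matrix (Fin 2) (Fin 2) ℂ :=
  ![(1 / (Real.sqrt 2 : ℂ)) • (X * Z - X), Z, (1 / (Real.sqrt 2 : ℂ)) • (X + X * Z)]

end

noncomputable def mT : Fin 3 → Fin 3 → Fin 3 → Fin 3 → ℂ :=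
  ![![![![(1 : ℂ), (0 : ℂ), (0 : ℂ)], ![(0 : ℂ), (0 : ℂ), (0 : ℂ)], ![(0 : ℂ), (0 : ℂ), (0 : ℂ)]],
    ![![(0 : ℂ), (0 : ℂ), (0 : ℂ)], ![(1 : ℂ), (0 : ℂ), (0 : ℂ)], ![(0 : ℂ), (0 : ℂ), (0 : ℂ)]],
    ![![(0 : ℂ), (0 : ℂ), (-1 : ℂ)], ![(0 : ℂ), (1 : ℂ), (0 : ℂ)], ![(0 : ℂ), (0 : ℂ), (0 : ℂ)]]],
   ![![![(0 : ℂ), (1 : ℂ), (0 : ℂ)], ![(0 : ℂ), (0 : ℂ), (0 : ℂ)], ![(0 : ℂ), (0 : ℂ), (0 : ℂ)]],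
    ![![(0 : ℂ), (0 : ℂ), (1 : ℂ)], ![(0 : ℂ), (0 : ℂ), (0 : ℂ)], ![(1 : ℂ), (0 : ℂ), (0 : ℂ)]],
    ![![(0 : ℂ), (0 : ℂ), (0 : ℂ)], ![(0 : ℂ), (0 : ℂ), (0 : ℂ)], ![(0 : ℂ), (1 : ℂ), (0 : ℂ)]]],
   ![![![(0 : ℂ), (0 : ℂ), (0 : ℂ)], ![(0 : ℂ), (1 : ℂ), (0 : ℂ)], ![(-1 : ℂ), (0 : ℂ), (0 : ℂ)]],
    ![![(0 : ℂ), (0 : ℂ), (0 : ℂ)], ![(0 : ℂ), (0 : ℂ), (1 : ℂ)], ![(0 : ℂ), (0 : ℂ), (0 : ℂ)]],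
    ![![(0 : ℂ), (0 : ℂ), (0 : ℂ)], ![(0 : ℂ), (0 : ℂ), (0 : ℂ)], ![(0 : ℂ), (0 : ℂ), (1 : ℂ)]]]]

lemma hs2 : ((Real.sqrt 2 : ℝ) : ℂ) * ((Real.sqrt 2 : ℝ) : ℂ) = 2 := by
  rw [← Complex.ofReal_mul, Real.mul_self_sqrt] <;> norm_num


set_option maxHeartbeats 2000000 in
lemma Mval (a b c d : Fin 3) : M (a,b) (c,d) = mT a b c d := by
  have h2 := hs2
  have hne : ((Real.sqrt 2 : ℝ) : ℂ) ≠ 0 := by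
    intro h; rw [h, mul_zero] at h2; exact two_ne_zero h2.symm
  fin_cases a <;> fin_cases b <;> fin_cases c <;> fin_cases d <;>
    simp only [M, Sx, Sy, Sz, mT, Matrix.add_apply, Matrix.kroneckerMap_apply,
      Matrix.smul_apply, Matrix.cons_val', Matrix.cons_val_zero, Matrix.cons_val_one,
      Matrix.head_cons, Matrix.cons_val_fin_one, Matrix.empty_val',
      Matrix.cons_val_two, Matrix.tail_cons, Matrix.head_fin_const, smul_eq_mul,
      Fin.isValue, Matrix.of_apply, Matrix.cons_val, Fin.zero_eta, Fin.mk_one, Fin.reduceFinMk] <;>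
    field_simp <;>
    ring_nf <;>
    (try rw [show ((Real.sqrt 2:ℝ):ℂ)^2 = 2 by rw [sq]; exact h2]) <;>
    norm_num [Complex.I_sq]


noncomputable def hT : Fin 3 → Fin 3 → Fin 3 → Fin 3 → ℂ :=
  ![![![![(1 : ℂ), (0 : ℂ), (0 : ℂ)], ![(0 : ℂ), (0 : ℂ), (0 : ℂ)], ![(0 : ℂ), (0 : ℂ), (0 : ℂ)]],
    ![![(0 : ℂ), (1/2 : ℂ), (0 : ℂ)], ![(1/2 : ℂ), (0 : ℂ), (0 : ℂ)], ![(0 : ℂ), (0 : ℂ), (0 : ℂ)]],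
    ![![(0 : ℂ), (0 : ℂ), (1/6 : ℂ)], ![(0 : ℂ), (1/3 : ℂ), (0 : ℂ)], ![(1/6 : ℂ), (0 : ℂ), (0 : ℂ)]]],
   ![![![(0 : ℂ), (1/2 : ℂ), (0 : ℂ)], ![(1/2 : ℂ), (0 : ℂ), (0 : ℂ)], ![(0 : ℂ), (0 : ℂ), (0 : ℂ)]],
    ![![(0 : ℂ), (0 : ℂ), (1/3 : ℂ)], ![(0 : ℂ), (2/3 : ℂ), (0 : ℂ)], ![(1/3 : ℂ), (0 : ℂ), (0 : ℂ)]],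
    ![![(0 : ℂ), (0 : ℂ), (0 : ℂ)], ![(0 : ℂ), (0 : ℂ), (1/2 : ℂ)], ![(0 : ℂ), (1/2 : ℂ), (0 : ℂ)]]],
   ![![![(0 : ℂ), (0 : ℂ), (1/6 : ℂ)], ![(0 : ℂ), (1/3 : ℂ), (0 : ℂ)], ![(1/6 : ℂ), (0 : ℂ), (0 : ℂ)]],
    ![![(0 : ℂ), (0 : ℂ), (0 : ℂ)], ![(0 : ℂ), (0 : ℂ), (1/2 : ℂ)], ![(0 : ℂ), (1/2 : ℂ), (0 : ℂ)]],
    ![![(0 : ℂ), (0 : ℂ), (0 : ℂ)], ![(0 : ℂ), (0 : ℂ), (0 : ℂ)], ![(0 : ℂ), (0 : ℂ), (1 : ℂ)]]]]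

lemma Mval' (p q : Fin 3 × Fin 3) : M p q = mT p.1 p.2 q.1 q.2 := Mval p.1 p.2 q.1 q.2

set_option maxHeartbeats 2000000 in
lemma Hval (a b c d : Fin 3) : H (a,b) (c,d) = hT a b c d := by
  simp only [H, Matrix.add_apply, Matrix.smul_apply, Matrix.mul_apply, Matrix.one_apply,
    Fintype.sum_prod_type, Fin.sum_univ_three, Mval', smul_eq_mul, Prod.mk.injEq]
  fin_cases a <;> fin_cases b <;> fin_cases c <;> fin_cases d <;>
    norm_num [mT, hT, Fin.ext_iff, Matrix.vecHead, Matrix.vecTail, Function.comp, Matrix.cons_val, Matrix.cons_val_two, Matrix.cons_val_one, Matrix.cons_val_zero, Matrix.head_cons, Matrix.tail_cons, Fin.succ_zero_eq_one, Matrix.cons_val_succ]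


set_option maxHeartbeats 2000000 in
/-- **local frustration-freeness of the AKLT chain.** For all `m₁ m₂ : Fin 3`,
`Σ_{l₁ l₂} H (m₁,m₂) (l₁,l₂) • (B l₁ · B l₂) = 0`. -/
theorem statement10 (m₁ m₂ : Fin 3) :
    ∑ l₁ : Fin 3, ∑ l₂ : Fin 3, H (m₁, m₂) (l₁, l₂) • (B l₁ * B l₂) = 0 := by
  have h2 := hs2
  have hne : ((Real.sqrt 2 : ℝ) : ℂ) ≠ 0 := by
    intro h; rw [h, mul_zero] at h2; exact two_ne_zero h2.symm
  simp only [Fin.sum_univ_three, Hval]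
  fin_cases m₁ <;> fin_cases m₂ <;>
  · simp only [hT, Matrix.cons_val_zero, Matrix.cons_val_one, Matrix.head_cons,
      Matrix.cons_val_two, Matrix.tail_cons, zero_smul, add_zero, zero_add, one_smul,
      Fin.isValue]
    ext i j
    fin_cases i <;> fin_cases j <;>
    · simp [B, X, Z, Matrix.mul_apply, Fin.sum_univ_two, Matrix.smul_apply, Matrix.add_apply,
        Matrix.vecHead, Matrix.vecTail, Matrix.sub_apply, Matrix.one_apply]
      try field_simp
      try ring_nf
      try rw [show ((Real.sqrt 2:ℝ):ℂ)^2 = 2 by rw [sq]; exact h2]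
      try ring_nf
      try norm_num
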